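/- Let ξ : 𝔅 → ℝ be of the form ξ(b) = E[κ(X)·(1[X'b > 0] - 1[X'β > 0])] where X is a random vector in ℝ^K and κ is a measurable function such that κ(x) > 0 when x'β > 0, κ(x) < 0 when x'β < 0, and κ(x) = 0 when x'β = 0 (almost surely in X). Then ξ(b) ≤ 0 for every b, with ξ(β) = 0; i.e., β maximizes ξ over any set containing β. -/
import Mathlib


open MeasureTheory

theorem stmt17 (K : ℕ) (μ : Measure (Fin K → ℝ)) [IsProbabilityMeasure μ]
    (β : Fin K → ℝ) (κ : (Fin K → ℝ) → ℝ)
    (hsign : ∀ᵐ x ∂μ,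
      (0 < ∑ i, x i * β i → 0 < κ x) ∧
      ((∑ i, x i * β i) < 0 → κ x < 0) ∧
      ((∑ i, x i * β i) = 0 → κ x = 0))
    (hint : ∀ b : Fin K → ℝ, Integrable (fun x =>
      κ x * ((if 0 < ∑ i, x i * b i then (1:ℝ) else 0) -
             (if 0 < ∑ i, x i * β i then (1:ℝ) else 0))) μ)
    (ξ : (Fin K → ℝ) → ℝ)
    (hξ : ∀ b, ξ b = ∫ x, κ x * ((if 0 < ∑ i, x i * b i then (1:ℝ) else 0) -
             (if 0 < ∑ i, x i * β i then (1:ℝ) else 0)) ∂μ) :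
    (∀ b, ξ b ≤ 0) ∧ ξ β = 0 := by
  constructor
  · intro b
    rw [hξ b]
    have h : ∀ᵐ x ∂μ, κ x * ((if 0 < ∑ i, x i * b i then (1:ℝ) else 0) -
             (if 0 < ∑ i, x i * β i then (1:ℝ) else 0)) ≤ 0 := by
      filter_upwards [hsign] with x ⟨h1, h2, h3⟩
      have hb0 : (0:ℝ) ≤ (if 0 < ∑ i, x i * b i then (1:ℝ) else 0) := by
        split <;> norm_num
      have hb1 : (if 0 < ∑ i, x i * b i then (1:ℝ) else 0) ≤ 1 := by
        split <;> norm_num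
      rcases lt_trichotomy (∑ i, x i * β i) 0 with hs | hs | hs
      · have hβ : (if 0 < ∑ i, x i * β i then (1:ℝ) else 0) = 0 := by
          rw [if_neg (by linarith)]
        rw [hβ]
        nlinarith [h2 hs]
      · simp [h3 hs]
      · have hβ : (if 0 < ∑ i, x i * β i then (1:ℝ) else 0) = 1 := if_pos hs
        rw [hβ]
        nlinarith [h1 hs]
    calc ∫ x, κ x * ((if 0 < ∑ i, x i * b i then (1:ℝ) else 0) -
             (if 0 < ∑ i, x i * β i then (1:ℝ) else 0)) ∂μ
        ≤ ∫ _x, (0:ℝ) ∂μ := integral_mono_ae (hint b) (integrable_const 0) h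
      _ = 0 := by simp
  · rw [hξ β]
    simp
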